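/- For each n, k with 0 ≤ k ≤ n, there is a bijection between the set A(n,k) of pairs (μ, a) where μ is a partition and a ∈ ℤ_{≥0}^k with |μ| + |a| = n - k, and the set M(n,k) of decreasing chains of partitions λ^{(n)} ⊃ λ^{(n-1)} ⊃ ⋯ ⊃ λ^{(n-k)} with |λ^{(n-i)}| = n - i such that λ^{(n)} \ λ^{(n-k)} is a horizontal strip. The bijection sends (μ, a) to the chain with λ^{(n-i)} = sort(μ₁,...,μ_{ℓ(μ)}, a₁,...,a_i, a_{i+1}+1,...,a_k+1)′ for 0 ≤ i ≤ k, where sort arranges entries in decreasing order discarding zeros and ′ denotes conjugate partition. -/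

import Mathlib

set_option linter.unnecessarySeqFocus false

/-! ### Counting function of a multiset (conjugate partition) -/

def cnt (s : Multiset ℕ) (j : ℕ) : ℕ := (s.filter (fun x => j < x)).card

lemma cnt_zero (j : ℕ) : cnt 0 j = 0 := rfl

lemma cnt_add (s t : Multiset ℕ) (j : ℕ) : cnt (s + t) j = cnt s j + cnt t j := by
  simp [cnt, Multiset.filter_add]

lemma cnt_cons (a : ℕ) (s : Multiset ℕ) (j : ℕ) :
    cnt (a ::ₘ s) j = (if j < a then 1 else 0) + cnt s j := by
  by_cases h : j < a <;> simp [cnt, Multiset.filter_cons, h] <;> omega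

lemma cnt_antitone (s : Multiset ℕ) : Antitone (cnt s) := by
  intro j j' h
  apply Multiset.card_le_card
  apply Multiset.monotone_filter_right
  intro x hx
  omega

lemma cnt_eq_zero (s : Multiset ℕ) (j : ℕ) (h : s.sum ≤ j) : cnt s j = 0 := by
  rw [cnt, Multiset.card_eq_zero, Multiset.filter_eq_nil]
  intro x hx
  have : x ≤ s.sum := Multiset.single_le_sum (fun y _ => Nat.zero_le y) x hx
  omega

lemma support_cnt_finite (s : Multiset ℕ) :
    (Function.support (fun j => cnt s j)).Finite := by
  apply Set.Finite.subset (Set.finite_Iio s.sum)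
  intro j hj
  simp only [Function.mem_support] at hj
  simp only [Set.mem_Iio]
  by_contra hc
  exact hj (cnt_eq_zero s j (le_of_not_gt hc))

lemma sum_range_ite (N a : ℕ) (h : a ≤ N) :
    ∑ j ∈ Finset.range N, (if j < a then 1 else 0) = a := by
  rw [Finset.sum_ite, Finset.sum_const, Finset.sum_const]
  have : (Finset.range N).filter (fun j => j < a) = Finset.range a := by
    ext x; simp; omega
  simp [this]

lemma sum_range_cnt (s : Multiset ℕ) (N : ℕ) (h : s.sum ≤ N) :
    ∑ j ∈ Finset.range N, cnt s j = s.sum := by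
  induction s using Multiset.induction with
  | empty => simp [cnt_zero]
  | cons a t ih =>
    have ha : a ≤ N := by
      have := Multiset.sum_cons a t; omega
    have ht : t.sum ≤ N := by
      have := Multiset.sum_cons a t; omega
    simp only [cnt_cons, Finset.sum_add_distrib, ih ht, sum_range_ite N a ha,
      Multiset.sum_cons]

lemma finsum_eq_sum_range (f : ℕ → ℕ) (N : ℕ) (h : ∀ j, N ≤ j → f j = 0) :
    ∑ᶠ j, f j = ∑ j ∈ Finset.range N, f j := by
  apply finsum_eq_finset_sum_of_support_subset
  intro j hj
  simp only [Function.mem_support] at hj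
  simp only [Finset.coe_range, Set.mem_Iio]
  by_contra hc
  exact hj (h j (le_of_not_gt hc))

lemma finsum_cnt (s : Multiset ℕ) : ∑ᶠ j, cnt s j = s.sum := by
  rw [finsum_eq_sum_range _ s.sum (fun j hj => cnt_eq_zero s j hj)]
  exact sum_range_cnt s s.sum le_rfl

lemma cnt_map_filter {k : ℕ} (f : Fin k → ℕ) (P : Fin k → Prop) [DecidablePred P] (j : ℕ) :
    cnt (Multiset.map f (Finset.univ.filter P).val) j
      = ∑ l : Fin k, if P l then (if j < f l then 1 else 0) else 0 := by
  rw [cnt, ← Multiset.countP_eq_card_filter, Multiset.countP_map]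
  have : Multiset.card (Multiset.filter (fun a => j < f a) (Finset.univ.filter P).val)
      = ((Finset.univ.filter P).filter (fun a => j < f a)).card := rfl
  rw [this, Finset.card_filter, Finset.sum_filter]

lemma card_filter_range_getD (L : List ℕ) (p : ℕ → Prop) [DecidablePred p] :
    ((Finset.range L.length).filter (fun m => p (L.getD m 0))).card
      = L.countP (fun x => decide (p x)) := by
  induction L with
  | nil => simp
  | cons a t ih =>
    rw [Finset.card_filter, List.length_cons, Finset.sum_range_succ']
    simp only [List.getD_cons_succ, List.getD_cons_zero, List.countP_cons]
    rw [← Finset.card_filter, ih]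
    by_cases h : p a <;> simp [h]

lemma ncard_eq_cnt (s : Multiset ℕ) (j : ℕ) :
    Set.ncard {m : ℕ | j < ((Multiset.sort s (· ≤ ·)).reverse.getD m 0)} = cnt s j := by
  classical
  set L := (Multiset.sort s (· ≤ ·)).reverse with hL
  have h1 : {m : ℕ | j < L.getD m 0}
      = ↑((Finset.range L.length).filter (fun m => j < L.getD m 0)) := by
    ext m
    simp only [Set.mem_setOf_eq, Finset.coe_filter, Finset.mem_range, Set.mem_setOf_eq]
    constructor
    · intro h
      refine ⟨?_, h⟩
      by_contra hm
      rw [List.getD_eq_default _ _ (le_of_not_gt hm)] at h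
      omega
    · exact fun h => h.2
  rw [h1, Set.ncard_coe_finset, card_filter_range_getD L (fun x => j < x)]
  rw [hL, List.countP_reverse]
  have : (Multiset.sort s (· ≤ ·) : Multiset ℕ) = s := by rw [Multiset.sort_eq]
  calc (Multiset.sort s (· ≤ ·)).countP (fun x => decide (j < x))
      = Multiset.countP (fun x => j < x) ↑(Multiset.sort s (· ≤ ·)) := rfl
    _ = Multiset.countP (fun x => j < x) s := by rw [this]
    _ = cnt s j := by simp [cnt, Multiset.countP_eq_card_filter]

/-! ### Extensionality and realization -/

lemma cnt_succ_count (s : Multiset ℕ) (v : ℕ) :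
    cnt s v = cnt s (v + 1) + s.count (v + 1) := by
  induction s using Multiset.induction with
  | empty => simp [cnt_zero]
  | cons a t ih =>
    rw [cnt_cons, cnt_cons, Multiset.count_cons, ih]
    split_ifs <;> omega

lemma multiset_eq_of_cnt_eq (s t : Multiset ℕ) (hs : ∀ x ∈ s, 0 < x) (ht : ∀ x ∈ t, 0 < x)
    (h : ∀ j, cnt s j = cnt t j) : s = t := by
  ext v
  match v with
  | 0 =>
    rw [Multiset.count_eq_zero_of_notMem, Multiset.count_eq_zero_of_notMem]
    · intro hv; exact absurd (ht 0 hv) (lt_irrefl 0)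
    · intro hv; exact absurd (hs 0 hv) (lt_irrefl 0)
  | v + 1 =>
    have h1 := cnt_succ_count s v
    have h2 := cnt_succ_count t v
    have := h v; have := h (v + 1)
    omega

lemma cnt_replicate (m v j : ℕ) : cnt (Multiset.replicate m v) j = if j < v then m else 0 := by
  induction m with
  | zero => simp [cnt_zero]
  | succ m ih =>
    rw [Multiset.replicate_succ, cnt_cons, ih]
    split_ifs <;> omega

def cntHom (j : ℕ) : Multiset ℕ →+ ℕ where
  toFun s := cnt s j
  map_zero' := rfl
  map_add' s t := cnt_add s t j

lemma cnt_finset_sum {α : Type*} (T : Finset α) (g : α → Multiset ℕ) (j : ℕ) :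
    cnt (∑ v ∈ T, g v) j = ∑ v ∈ T, cnt (g v) j := map_sum (cntHom j) g T

lemma telescope (d : ℕ → ℕ) (hd : Antitone d) (j M : ℕ) (hjM : j ≤ M) :
    ∑ v ∈ Finset.Ico j M, (d v - d (v + 1)) = d j - d M := by
  induction M, hjM using Nat.le_induction with
  | base => simp
  | succ M hM ih =>
    rw [Finset.sum_Ico_succ_top hM, ih]
    have h1 : d (M + 1) ≤ d M := hd (Nat.le_succ M)
    have h2 : d M ≤ d j := hd hM
    omega

lemma realize (d : ℕ → ℕ) (hd : Antitone d) (N : ℕ) (hN : ∀ j, N ≤ j → d j = 0) :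
    ∃ μ : Multiset ℕ, (∀ x ∈ μ, 0 < x) ∧ (∀ j, cnt μ j = d j) := by
  refine ⟨∑ v ∈ Finset.range N, Multiset.replicate (d v - d (v + 1)) (v + 1), ?_, ?_⟩
  · intro x hx
    rw [Multiset.mem_sum] at hx
    obtain ⟨v, _, hv⟩ := hx
    rw [Multiset.eq_of_mem_replicate hv]
    omega
  · intro j
    rw [cnt_finset_sum]
    simp only [cnt_replicate]
    by_cases hj : j < N
    · have hfil : (Finset.range N).filter (fun v => j < v + 1) = Finset.Ico j N := by
        ext x; simp [Finset.mem_Ico]; omega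
      rw [← Finset.sum_filter, hfil, telescope d hd j N (le_of_lt hj), hN N le_rfl,
        Nat.sub_zero]
    · rw [Finset.sum_eq_zero, hN j (le_of_not_gt hj)]
      intro v hv
      rw [Finset.mem_range] at hv
      have : ¬ j < v + 1 := by omega
      simp [this]

/-! ### The multiset `S_i` and its counting function -/

def Scal {k : ℕ} (μ : Multiset ℕ) (a : Fin k → ℕ) (i : ℕ) : Multiset ℕ :=
  μ + Multiset.map a ((Finset.univ.filter (fun l : Fin k => (l : ℕ) < i)).val)
    + Multiset.map (fun l => a l + 1) ((Finset.univ.filter (fun l : Fin k => i ≤ (l : ℕ))).val)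

lemma cnt_Scal {k : ℕ} (μ : Multiset ℕ) (a : Fin k → ℕ) (i j : ℕ) :
    cnt (Scal μ a i) j = cnt μ j
      + ∑ l : Fin k, (if (l : ℕ) < i then (if j < a l then 1 else 0)
          else (if j < a l + 1 then 1 else 0)) := by
  rw [Scal, cnt_add, cnt_add, cnt_map_filter, cnt_map_filter, add_assoc,
    ← Finset.sum_add_distrib]
  congr 1
  apply Finset.sum_congr rfl
  intro l _
  by_cases h : (l : ℕ) < i
  · have h' : ¬ (i ≤ (l : ℕ)) := by omega
    simp [h, h']
  · have h' : i ≤ (l : ℕ) := by omega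
    simp [h, h']

lemma cnt_Scal_split {k : ℕ} (μ : Multiset ℕ) (a : Fin k → ℕ) (i j : ℕ) :
    cnt (Scal μ a i) j = cnt μ j + (∑ l : Fin k, if j < a l then 1 else 0)
      + (∑ l : Fin k, if i ≤ (l : ℕ) then (if j = a l then 1 else 0) else 0) := by
  rw [cnt_Scal, add_assoc, ← Finset.sum_add_distrib]
  congr 1
  apply Finset.sum_congr rfl
  intro l _
  by_cases h : (l : ℕ) < i
  · have h' : ¬ (i ≤ (l : ℕ)) := by omega
    split_ifs <;> omega
  · have h' : i ≤ (l : ℕ) := by omega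
    split_ifs <;> omega

lemma card_filter_le {k : ℕ} (i : ℕ) :
    ((Finset.univ : Finset (Fin k)).filter (fun l : Fin k => i ≤ (l : ℕ))).card = k - i := by
  have h0 : ((Finset.univ : Finset (Fin k)).filter (fun l : Fin k => i ≤ (l : ℕ)))
      = (Finset.Ico i k).attachFin (fun m hm => (Finset.mem_Ico.mp hm).2) := by
    ext l
    simp [Finset.mem_attachFin, Finset.mem_Ico, l.isLt]
  rw [h0, Finset.card_attachFin, Nat.card_Ico]

lemma sum_Scal {k : ℕ} (μ : Multiset ℕ) (a : Fin k → ℕ) (i : ℕ) :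
    (Scal μ a i).sum = μ.sum + (∑ l, a l) + (k - i) := by
  rw [Scal, Multiset.sum_add, Multiset.sum_add]
  have e1 : (Multiset.map a ((Finset.univ.filter (fun l : Fin k => (l : ℕ) < i)).val)).sum
      = ∑ l ∈ Finset.univ.filter (fun l : Fin k => (l : ℕ) < i), a l := rfl
  have e2 : (Multiset.map (fun l => a l + 1)
        ((Finset.univ.filter (fun l : Fin k => i ≤ (l : ℕ))).val)).sum
      = ∑ l ∈ Finset.univ.filter (fun l : Fin k => i ≤ (l : ℕ)), (a l + 1) := rfl
  rw [e1, e2, Finset.sum_add_distrib, Finset.sum_const, smul_eq_mul, mul_one,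
    card_filter_le]
  have hfil : (Finset.univ.filter (fun l : Fin k => i ≤ (l : ℕ)))
      = Finset.univ.filter (fun l : Fin k => ¬ ((l : ℕ) < i)) := by
    ext x; simp; try omega
  have hsplit := Finset.sum_filter_add_sum_filter_not
    (Finset.univ : Finset (Fin k)) (fun l : Fin k => (l : ℕ) < i) a
  rw [hfil]
  omega

/-- the `l = i` term split off a tail sum -/
lemma sum_split_at {k : ℕ} (i : Fin k) (g : Fin k → ℕ) :
    (∑ l : Fin k, if (i : ℕ) ≤ (l : ℕ) then g l else 0)
      = g i + ∑ l : Fin k, if (i : ℕ) + 1 ≤ (l : ℕ) then g l else 0 := by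
  have : (g i : ℕ) = ∑ l : Fin k, if l = i then g l else 0 := by
    rw [Finset.sum_ite_eq' Finset.univ i g]
    simp
  rw [this, ← Finset.sum_add_distrib]
  apply Finset.sum_congr rfl
  intro l _
  by_cases h : l = i
  · subst h
    have : ¬ ((l : ℕ) + 1 ≤ (l : ℕ)) := by omega
    simp [this]
  · have hv : (l : ℕ) ≠ (i : ℕ) := fun hc => h (Fin.ext hc)
    by_cases h2 : (i : ℕ) ≤ (l : ℕ)
    · have h3 : (i : ℕ) + 1 ≤ (l : ℕ) := by omega
      simp [h, h2, h3]
    · have h3 : ¬ ((i : ℕ) + 1 ≤ (l : ℕ)) := by omega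
      simp [h, h2, h3]

/-! ### The forward map -/

abbrev Atype (n k : ℕ) := {p : Multiset ℕ × (Fin k → ℕ) //
    (∀ x ∈ p.1, 0 < x) ∧ p.1.sum + ∑ j, p.2 j = n - k}

abbrev Mtype (n k : ℕ) := {c : Fin (k + 1) → ℕ → ℕ //
    (∀ i, Antitone (c i)) ∧
    (∀ i, (Function.support (c i)).Finite) ∧
    (∀ i : Fin (k + 1), ∑ᶠ j, c i j = n - (i : ℕ)) ∧
    (∀ i : Fin k, ∀ j, c i.succ j ≤ c i.castSucc j) ∧
    (∀ j, c 0 (j + 1) ≤ c (Fin.last k) j)}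

lemma mem_M {n k : ℕ} (hkn : k ≤ n) (μ : Multiset ℕ) (a : Fin k → ℕ)
    (hsum : μ.sum + ∑ l, a l = n - k) :
    (∀ i, Antitone ((fun (i : Fin (k+1)) (j : ℕ) => cnt (Scal μ a (i : ℕ)) j) i)) ∧
    (∀ i, (Function.support ((fun (i : Fin (k+1)) (j : ℕ) => cnt (Scal μ a (i : ℕ)) j) i)).Finite) ∧
    (∀ i : Fin (k + 1), ∑ᶠ j, cnt (Scal μ a (i : ℕ)) j = n - (i : ℕ)) ∧
    (∀ i : Fin k, ∀ j, cnt (Scal μ a ((i.succ : Fin (k+1)) : ℕ)) j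
        ≤ cnt (Scal μ a ((i.castSucc : Fin (k+1)) : ℕ)) j) ∧
    (∀ j, cnt (Scal μ a ((0 : Fin (k+1)) : ℕ)) (j + 1)
        ≤ cnt (Scal μ a ((Fin.last k : Fin (k+1)) : ℕ)) j) := by
  refine ⟨fun i => cnt_antitone _, fun i => support_cnt_finite _, ?_, ?_, ?_⟩
  · intro i
    rw [finsum_cnt, sum_Scal]
    have hi : (i : ℕ) ≤ k := by omega
    omega
  · intro i j
    simp only [Fin.val_succ, Fin.coe_castSucc]
    rw [cnt_Scal, cnt_Scal]
    apply Nat.add_le_add_left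
    apply Finset.sum_le_sum
    intro l _
    split_ifs <;> omega
  · intro j
    simp only [Fin.val_zero, Fin.val_last]
    rw [cnt_Scal, cnt_Scal]
    apply add_le_add (cnt_antitone μ (Nat.le_succ j))
    apply le_of_eq
    apply Finset.sum_congr rfl
    intro l _
    have := l.isLt
    split_ifs <;> omega

def fmap (n k : ℕ) (hkn : k ≤ n) : Atype n k → Mtype n k := fun p =>
  ⟨fun i j => cnt (Scal p.1.1 p.1.2 (i : ℕ)) j, mem_M hkn p.1.1 p.1.2 p.2.2⟩

lemma cnt_Scal_step {k : ℕ} (μ : Multiset ℕ) (a : Fin k → ℕ) (i : Fin k) (j : ℕ) :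
    cnt (Scal μ a (i : ℕ)) j = cnt (Scal μ a ((i : ℕ) + 1)) j + (if j = a i then 1 else 0) := by
  rw [cnt_Scal_split, cnt_Scal_split, sum_split_at i (fun l => if j = a l then 1 else 0)]
  omega

lemma cnt_Scal_last {k : ℕ} (μ : Multiset ℕ) (a : Fin k → ℕ) (j : ℕ) :
    cnt (Scal μ a k) j = cnt μ j + ∑ l : Fin k, (if j < a l then 1 else 0) := by
  rw [cnt_Scal_split]
  have : (∑ l : Fin k, if (k : ℕ) ≤ (l : ℕ) then (if j = a l then 1 else 0) else 0) = 0 := by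
    apply Finset.sum_eq_zero
    intro l _
    have := l.isLt
    have h : ¬ ((k : ℕ) ≤ (l : ℕ)) := by omega
    simp [h]
  omega

lemma fmap_inj (n k : ℕ) (hkn : k ≤ n) : Function.Injective (fmap n k hkn) := by
  rintro ⟨⟨μ, a⟩, hp⟩ ⟨⟨ν, b⟩, hq⟩ h
  have h' := Subtype.ext_iff.mp h
  simp only [fmap] at h'
  have hij : ∀ (i : Fin (k+1)) (j : ℕ),
      cnt (Scal μ a (i : ℕ)) j = cnt (Scal ν b (i : ℕ)) j :=
    fun i j => congrFun (congrFun h' i) j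
  have hab : a = b := by
    funext i
    have e1 := hij i.castSucc (a i)
    have e2 := hij i.succ (a i)
    rw [Fin.coe_castSucc] at e1
    rw [Fin.val_succ] at e2
    have s1 := cnt_Scal_step μ a i (a i)
    have s2 := cnt_Scal_step ν b i (a i)
    have key : (if a i = a i then 1 else 0) = (if a i = b i then (1:ℕ) else 0) := by omega
    by_cases hc : a i = b i
    · exact hc
    · simp [hc] at key
  subst hab
  have hμν : μ = ν := by
    apply multiset_eq_of_cnt_eq μ ν hp.1 hq.1
    intro j
    have e := hij (Fin.last k) j
    rw [Fin.val_last] at e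
    rw [cnt_Scal_last, cnt_Scal_last] at e
    omega
  subst hμν
  rfl

lemma bound_of_finite (f : ℕ → ℕ) (hf : (Function.support f).Finite) :
    ∃ N, ∀ j, N ≤ j → f j = 0 := by
  refine ⟨hf.toFinset.sup id + 1, fun j hj => ?_⟩
  by_contra hc
  have hm : j ∈ hf.toFinset := by
    rw [Set.Finite.mem_toFinset, Function.mem_support]
    exact hc
  have := Finset.le_sup (f := id) hm
  simp only [id] at this
  omega

lemma exists_step (g h : ℕ → ℕ) (hle : ∀ j, h j ≤ g j) (N : ℕ)
    (h0 : ∀ j, N ≤ j → g j = 0)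
    (hsum : ∑ j ∈ Finset.range N, g j = (∑ j ∈ Finset.range N, h j) + 1) :
    ∃ j0, ∀ j, g j = h j + (if j = j0 then 1 else 0) := by
  have hd : ∑ j ∈ Finset.range N, (g j - h j) = 1 := by
    have e : ∑ j ∈ Finset.range N, (g j - h j + h j) = ∑ j ∈ Finset.range N, g j :=
      Finset.sum_congr rfl (fun j _ => Nat.sub_add_cancel (hle j))
    rw [Finset.sum_add_distrib] at e
    omega
  have hex : ∃ j0 ∈ Finset.range N, g j0 - h j0 ≠ 0 := by
    apply Finset.exists_ne_zero_of_sum_ne_zero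
    rw [hd]; exact one_ne_zero
  obtain ⟨j0, hj0m, hj0⟩ := hex
  have hle1 : ∀ m ∈ Finset.range N, (g m - h m) ≤ ∑ j ∈ Finset.range N, (g j - h j) :=
    fun m hm => Finset.single_le_sum (f := fun x => g x - h x) (fun j _ => Nat.zero_le _) hm
  have herase0 : (∑ j ∈ (Finset.range N).erase j0, (g j - h j)) + (g j0 - h j0)
      = ∑ j ∈ Finset.range N, (g j - h j) :=
    Finset.sum_erase_add _ _ hj0m
  have hle1' := hle1 j0 hj0m
  refine ⟨j0, fun j => ?_⟩
  by_cases hj : j = j0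
  · subst hj
    have := hle j
    rw [if_pos rfl]
    omega
  · rw [if_neg hj]
    by_cases hjN : j < N
    · have hmem : j ∈ (Finset.range N).erase j0 :=
        Finset.mem_erase.mpr ⟨hj, Finset.mem_range.mpr hjN⟩
      have h1 : (g j - h j) ≤ ∑ m ∈ (Finset.range N).erase j0, (g m - h m) :=
        Finset.single_le_sum (f := fun x => g x - h x) (fun x _ => Nat.zero_le _) hmem
      have := hle j
      omega
    · have hg := h0 j (by omega)
      have := hle j
      omega

lemma fmap_surj (n k : ℕ) (hkn : k ≤ n) : Function.Surjective (fmap n k hkn) := by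
  rintro ⟨c, hc1, hc2, hc3, hc4, hc5⟩
  -- a uniform vanishing bound for all rows of the chain
  obtain ⟨N, hN⟩ : ∃ N, ∀ (i : Fin (k+1)) (j : ℕ), N ≤ j → c i j = 0 := by
    choose Nf hNf using fun i => bound_of_finite (c i) (hc2 i)
    exact ⟨Finset.univ.sup Nf, fun i j hj =>
      hNf i j (le_trans (Finset.le_sup (Finset.mem_univ i)) hj)⟩
  -- the box removed at each step
  have hstep : ∀ i : Fin k, ∃ a0 : ℕ, ∀ j,
      c i.castSucc j = c i.succ j + (if j = a0 then 1 else 0) := by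
    intro i
    apply exists_step (c i.castSucc) (c i.succ) (hc4 i) N (hN i.castSucc)
    have e1 : ∑ j ∈ Finset.range N, c i.castSucc j = n - (i : ℕ) := by
      rw [← finsum_eq_sum_range _ N (hN i.castSucc), hc3 i.castSucc, Fin.coe_castSucc]
    have e2 : ∑ j ∈ Finset.range N, c i.succ j = n - ((i : ℕ) + 1) := by
      rw [← finsum_eq_sum_range _ N (hN i.succ), hc3 i.succ, Fin.val_succ]
    have := i.isLt
    omega
  choose a ha using hstep
  -- telescoped identity
  have keyi : ∀ (i : Fin (k+1)) (j : ℕ), c i j = c (Fin.last k) j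
      + ∑ l : Fin k, (if (i : ℕ) ≤ (l : ℕ) then (if j = a l then 1 else 0) else 0) := by
    intro i
    induction i using Fin.reverseInduction with
    | last =>
      intro j
      rw [Finset.sum_eq_zero, add_zero]
      intro l _
      have := l.isLt
      rw [Fin.val_last]
      have hl : ¬ (k ≤ (l : ℕ)) := by omega
      simp [hl]
    | cast i ih =>
      intro j
      rw [ha i j, ih j]
      have hsp := sum_split_at i (fun l => if j = a l then 1 else 0)
      simp only [Fin.coe_castSucc, Fin.val_succ]
      omega
  -- the multiset counting identity pieces
  have hD : ∀ j, c 0 j = c (Fin.last k) j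
      + ∑ l : Fin k, (if j = a l then 1 else 0) := by
    intro j
    have h0 := keyi 0 j
    simp only [Fin.val_zero, Nat.zero_le, if_true] at h0
    exact h0
  have hArec : ∀ j, (∑ l : Fin k, if j < a l then 1 else 0)
      = (∑ l : Fin k, if j + 1 < a l then 1 else 0)
        + ∑ l : Fin k, (if j + 1 = a l then 1 else 0) := by
    intro j
    rw [← Finset.sum_add_distrib]
    apply Finset.sum_congr rfl
    intro l _
    split_ifs <;> omega
  -- uniform bound for everything
  obtain ⟨N2, hN2N, hN2a⟩ : ∃ N2, N ≤ N2 ∧ ∀ l : Fin k, a l < N2 :=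
    ⟨N + Finset.univ.sup a + 1, by omega, fun l => by
      have := Finset.le_sup (f := a) (Finset.mem_univ l); omega⟩
  have hA0 : ∀ j, N2 ≤ j → (∑ l : Fin k, if j < a l then 1 else 0) = 0 := by
    intro j hj
    apply Finset.sum_eq_zero
    intro l _
    have := hN2a l
    have hl : ¬ (j < a l) := by omega
    simp [hl]
  -- the strip condition forces the key inequality
  have hAle : ∀ t j, N2 ≤ j + t →
      (∑ l : Fin k, if j < a l then 1 else 0) ≤ c (Fin.last k) j := by
    intro t
    induction t with
    | zero =>
      intro j hj
      rw [hA0 j (by omega)]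
      exact Nat.zero_le _
    | succ t ih =>
      intro j hj
      by_cases hjN : N2 ≤ j
      · rw [hA0 j hjN]; exact Nat.zero_le _
      · have h1 := hArec j
        have h2 := hD (j + 1)
        have h3 := hc5 j
        have h4 := ih (j + 1) (by omega)
        omega
  have hAle' : ∀ j, (∑ l : Fin k, if j < a l then 1 else 0) ≤ c (Fin.last k) j :=
    fun j => hAle N2 j (by omega)
  -- realize the partition μ
  have hdanti : Antitone (fun j => c (Fin.last k) j
      - ∑ l : Fin k, (if j < a l then 1 else 0)) := by
    apply antitone_nat_of_succ_le
    intro j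
    have h1 := hArec j
    have h2 := hD (j + 1)
    have h3 := hc5 j
    have h4 := hAle' j
    have h5 := hAle' (j + 1)
    omega
  have hd0 : ∀ j, N2 ≤ j → (fun j => c (Fin.last k) j
      - ∑ l : Fin k, (if j < a l then 1 else 0)) j = 0 := by
    intro j hj
    simp only
    rw [hN (Fin.last k) j (by omega)]
    omega
  obtain ⟨μ, hμpos, hμcnt⟩ := realize _ hdanti N2 hd0
  have hμcnt' : ∀ j, cnt μ j
      = c (Fin.last k) j - ∑ l : Fin k, (if j < a l then 1 else 0) := hμcnt
  have hck : ∀ j, cnt μ j + (∑ l : Fin k, if j < a l then 1 else 0)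
      = c (Fin.last k) j := by
    intro j
    have := hμcnt' j
    have := hAle' j
    omega
  -- the weight condition
  have hsum : μ.sum + ∑ l, a l = n - k := by
    have hμb : μ.sum ≤ N2 + μ.sum := by omega
    have hcksum : ∑ j ∈ Finset.range (N2 + μ.sum), c (Fin.last k) j = n - k := by
      rw [← finsum_eq_sum_range _ _ (fun j hj => hN (Fin.last k) j (by omega))]
      have := hc3 (Fin.last k)
      rwa [Fin.val_last] at this
    have h1 : ∑ j ∈ Finset.range (N2 + μ.sum), cnt μ j = μ.sum :=
      sum_range_cnt μ _ (by omega)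
    have h2 : ∑ j ∈ Finset.range (N2 + μ.sum),
        (∑ l : Fin k, if j < a l then 1 else 0) = ∑ l, a l := by
      rw [Finset.sum_comm]
      apply Finset.sum_congr rfl
      intro l _
      exact sum_range_ite _ (a l) (by have := hN2a l; omega)
    have h3 : ∑ j ∈ Finset.range (N2 + μ.sum),
        (cnt μ j + ∑ l : Fin k, (if j < a l then 1 else 0))
        = ∑ j ∈ Finset.range (N2 + μ.sum), c (Fin.last k) j :=
      Finset.sum_congr rfl (fun j _ => hck j)
    rw [Finset.sum_add_distrib] at h3
    omega
  refine ⟨⟨(μ, a), hμpos, hsum⟩, ?_⟩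
  apply Subtype.ext
  funext i j
  show cnt (Scal μ a (i : ℕ)) j = c i j
  rw [cnt_Scal_split, keyi i j]
  have := hck j
  omega

/-- Bijection between `A(n,k)` (pairs of a partition `μ` and `a ∈ ℤ_{≥0}^k` with
`|μ|+|a| = n-k`) and `M(n,k)` (chains `λ⁽ⁿ⁾ ⊃ ⋯ ⊃ λ⁽ⁿ⁻ᵏ⁾` with
`λ⁽ⁿ⁾ \ λ⁽ⁿ⁻ᵏ⁾` a horizontal strip), sending `(μ,a)` to the chain with
`λ⁽ⁿ⁻ⁱ⁾ = sort(μ₁,…,μ_ℓ, a₁,…,a_i, a_{i+1}+1,…,a_k+1)′`.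
Partitions in chains are encoded as antitone finitely-supported functions
`ℕ → ℕ`; the conjugate of the sorted sequence is expressed by counting entries
exceeding a given row index. -/
theorem stmt8 (n k : ℕ) (hkn : k ≤ n) :
    ∃ e : {p : Multiset ℕ × (Fin k → ℕ) //
            (∀ x ∈ p.1, 0 < x) ∧ p.1.sum + ∑ j, p.2 j = n - k} ≃
          {c : Fin (k + 1) → ℕ → ℕ //
            (∀ i, Antitone (c i)) ∧
            (∀ i, (Function.support (c i)).Finite) ∧
            (∀ i : Fin (k + 1), ∑ᶠ j, c i j = n - (i : ℕ)) ∧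
            (∀ i : Fin k, ∀ j, c i.succ j ≤ c i.castSucc j) ∧
            (∀ j, c 0 (j + 1) ≤ c (Fin.last k) j)},
      ∀ p i j,
        (e p).1 i j =
          Set.ncard {m : ℕ | j <
            ((Multiset.sort
              (p.1.1
                + Multiset.map p.1.2
                    ((Finset.univ.filter (fun l : Fin k => (l : ℕ) < (i : ℕ))).val)
                + Multiset.map (fun l => p.1.2 l + 1)
                    ((Finset.univ.filter (fun l : Fin k => (i : ℕ) ≤ (l : ℕ))).val)) (· ≤ ·)).reverse.getD m 0)} := by
  refine ⟨Equiv.ofBijective (fmap n k hkn) ⟨fmap_inj n k hkn, fmap_surj n k hkn⟩, ?_⟩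
  intro p i j
  show (fmap n k hkn p).1 i j = _
  rw [ncard_eq_cnt]
  rfl
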